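/- Let $N$ clients have accumulated gradients $\tilde{g}_j^{(r)} = \sum_{c=0}^{\tau-1}\tilde{g}_j^{(c,r)}$, each $\tilde{g}_j^{(c,r)}$ unbiased for $g_j^{(c,r)}$ with variance at most $\sigma^2$ and independent across clients and steps. Suppose quantization is unbiased with $\mathbb{E}_Q\|Q(\tilde{g}_j^{(r)}) - \tilde{g}_j^{(r)}\|^2 \leq q(\alpha_j^r(D_j^r - 1) + 1)\|\tilde{g}_j^{(r)}\|^2$ where $\alpha_j^r \in \{0,1\}$, $D_j^r < t \leq 1$ when $\alpha_j^r = 1$, and $q = \frac{4d}{(s-2)^2}$. Then $\mathbb{E}_{Q,z}\big\|\frac{1}{N}\sum_{j=1}^N Q(\tilde{g}_j^{(r)})\big\|^2 \leq \frac{\tau\sigma^2}{N}\big(\frac{q}{N}\sum_{j=1}^N(\alpha_j^r(t-1)+1) + 1\big) + \frac{\tau}{N}\sum_{j=1}^N\big(\frac{q(\alpha_j^r(t-1)+1)}{N} + 1\big)\sum_{c=0}^{\tau-1}\|g_j^{(c,r)}\|^2$. -/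

import Mathlib

open MeasureTheory ProbabilityTheory

/-- Lemma 1 of the paper: second-moment bound for the quantized average of accumulated
local stochastic gradients in FedSI.  The sampling randomness lives on `(Ωz, μz)` and
the quantization randomness on `(ΩQ, μQ)`.  Client `j` accumulates
`g̃_j = ∑_{c<τ} g̃_j⁽ᶜ⁾`, where the `g̃_j⁽ᶜ⁾` are unbiased for `g_j⁽ᶜ⁾` with variance
at most `σ²` and independent across clients and steps.  The quantizer is unbiased
with `E_Q‖Q(g̃_j) - g̃_j‖² ≤ q(α_j(D_j - 1) + 1)‖g̃_j‖²` where `q = 4d/(s-2)²`,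
`α_j ∈ {0,1}` and `D_j < t ≤ 1` whenever `α_j = 1`, and quantizations are independent
across clients.  Then
`E_{Q,z}‖(1/N)∑_j Q(g̃_j)‖² ≤ (τσ²/N)((q/N)∑_j(α_j(t-1)+1) + 1)
  + (τ/N)∑_j((q(α_j(t-1)+1))/N + 1)∑_{c<τ}‖g_j⁽ᶜ⁾‖²`. -/
lemma euclid_norm_sq {d : ℕ} (v : EuclideanSpace ℝ (Fin d)) :
    ‖v‖ ^ 2 = ∑ i, (v i) ^ 2 := by
  rw [EuclideanSpace.norm_eq, Real.sq_sqrt (by positivity)]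
  simp [sq_abs]

lemma euclid_coord_le {d : ℕ} (v : EuclideanSpace ℝ (Fin d)) (i : Fin d) :
    |v i| ≤ ‖v‖ := by
  rw [EuclideanSpace.norm_eq, ← Real.sqrt_sq_eq_abs]
  apply Real.sqrt_le_sqrt
  have := Finset.single_le_sum (f := fun k => ‖v k‖ ^ 2)
    (fun k _ => by positivity) (Finset.mem_univ i)
  simpa [sq_abs] using this

lemma euclid_sum_apply {d : ℕ} {ι : Type*} (s : Finset ι)
    (f : ι → EuclideanSpace ℝ (Fin d)) (i : Fin d) :
    (∑ j ∈ s, f j) i = ∑ j ∈ s, f j i :=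
  map_sum (EuclideanSpace.proj (𝕜 := ℝ) i) f s

lemma euclid_sub_apply {d : ℕ} (v w : EuclideanSpace ℝ (Fin d)) (i : Fin d) :
    (v - w) i = v i - w i := rfl

lemma fedsi_var_decomp {Ω : Type*} [MeasurableSpace Ω] (μ : Measure Ω)
    [IsProbabilityMeasure μ] {d : ℕ} {ι : Type*} [Fintype ι]
    (X : ι → Ω → EuclideanSpace ℝ (Fin d)) (m : ι → EuclideanSpace ℝ (Fin d))
    (hL2 : ∀ j, MemLp (X j) 2 μ) (hmeas : ∀ j, Measurable (X j))
    (hindep : ∀ j k, j ≠ k → IndepFun (X j) (X k) μ)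
    (hmean : ∀ j, ∫ ω, X j ω ∂μ = m j) :
    ∫ ω, ‖∑ j, X j ω‖ ^ 2 ∂μ
      = (∑ j, ∫ ω, ‖X j ω - m j‖ ^ 2 ∂μ) + ‖∑ j, m j‖ ^ 2 := by
  classical
  -- coordinate random variables
  have hYmeas : ∀ (j : ι) (i : Fin d), Measurable (fun ω => X j ω i) :=
    fun j i => ((EuclideanSpace.proj (𝕜 := ℝ) i).measurable).comp (hmeas j)
  have hYL2 : ∀ (j : ι) (i : Fin d), MemLp (fun ω => X j ω i) 2 μ := by
    intro j i
    refine (hL2 j).of_le (hYmeas j i).aestronglyMeasurable ?_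
    filter_upwards with ω
    simpa [Real.norm_eq_abs] using euclid_coord_le (X j ω) i
  have hYmean : ∀ (j : ι) (i : Fin d), ∫ ω, X j ω i ∂μ = m j i := by
    intro j i
    have := (EuclideanSpace.proj (𝕜 := ℝ) i).integral_comp_comm
      ((hL2 j).integrable one_le_two)
    simpa [hmean j] using this
  -- per-coordinate second moment
  have hcoord : ∀ i : Fin d,
      ∫ ω, (∑ j, X j ω i) ^ 2 ∂μ
        = (∑ j, ∫ ω, (X j ω i - m j i) ^ 2 ∂μ) + (∑ j, m j i) ^ 2 := by
    intro i
    set Z : Ω → ℝ := fun ω => ∑ j, X j ω i with hZ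
    have hZsum : Z = ∑ j : ι, (fun ω => X j ω i) := by
      funext ω; simp [hZ]
    have hZL2 : MemLp Z 2 μ := by
      rw [hZsum]; exact memLp_finset_sum' _ (fun j _ => hYL2 j i)
    have hvd := variance_eq_sub hZL2
    have hZmean : ∫ ω, Z ω ∂μ = ∑ j, m j i := by
      rw [hZ]
      rw [integral_finset_sum _ (fun j _ => ((hYL2 j i).integrable one_le_two))]
      exact Finset.sum_congr rfl fun j _ => hYmean j i
    have hvarsum : variance Z μ = ∑ j, variance (fun ω => X j ω i) μ := by
      rw [hZsum]
      exact IndepFun.variance_sum (fun j _ => hYL2 j i)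
        (fun j _ k _ hjk => (hindep j k hjk).comp
          (EuclideanSpace.proj (𝕜 := ℝ) i).measurable
          (EuclideanSpace.proj (𝕜 := ℝ) i).measurable)
    have hvar1 : ∀ j : ι, variance (fun ω => X j ω i) μ
        = ∫ ω, (X j ω i - m j i) ^ 2 ∂μ := by
      intro j
      have : variance (fun ω => X j ω i) μ
          = ∫ ω, ((((fun ω => X j ω i) - fun _ => ∫ x, X j x i ∂μ) ^ 2 : Ω → ℝ) ω) ∂μ :=
        variance_eq_integral (hYL2 j i).aestronglyMeasurable.aemeasurable
      rw [this, hYmean j i]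
      congr 1
    have h2 : ∫ ω, (Z ω) ^ 2 ∂μ = variance Z μ + (∫ ω, Z ω ∂μ) ^ 2 := by
      rw [hvd]
      have : μ[Z ^ 2] = ∫ ω, (Z ω) ^ 2 ∂μ := by
        congr 1
      rw [this]; ring
    calc ∫ ω, (∑ j, X j ω i) ^ 2 ∂μ = ∫ ω, (Z ω) ^ 2 ∂μ := rfl
      _ = variance Z μ + (∫ ω, Z ω ∂μ) ^ 2 := h2
      _ = (∑ j, ∫ ω, (X j ω i - m j i) ^ 2 ∂μ) + (∑ j, m j i) ^ 2 := by
          rw [hvarsum, hZmean]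
          congr 1
          exact Finset.sum_congr rfl fun j _ => hvar1 j
  -- assemble
  have hintsum : ∀ (j : ι) (i : Fin d),
      Integrable (fun ω => (X j ω i - m j i) ^ 2) μ :=
    fun j i => ((hYL2 j i).sub (memLp_const (m j i))).integrable_sq
  calc ∫ ω, ‖∑ j, X j ω‖ ^ 2 ∂μ
      = ∫ ω, ∑ i, (∑ j, X j ω i) ^ 2 ∂μ := by
        refine integral_congr_ae (Filter.Eventually.of_forall fun ω => ?_)
        simp only [euclid_norm_sq, euclid_sum_apply]
    _ = ∑ i, ∫ ω, (∑ j, X j ω i) ^ 2 ∂μ := by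
        refine integral_finset_sum _ fun i _ => ?_
        have : MemLp (fun ω => ∑ j, X j ω i) 2 μ := by
          have : (fun ω => ∑ j, X j ω i) = ∑ j : ι, (fun ω => X j ω i) := by
            funext ω; simp
          rw [this]; exact memLp_finset_sum' _ (fun j _ => hYL2 j i)
        exact this.integrable_sq
    _ = ∑ i, ((∑ j, ∫ ω, (X j ω i - m j i) ^ 2 ∂μ) + (∑ j, m j i) ^ 2) := by
        exact Finset.sum_congr rfl fun i _ => hcoord i
    _ = (∑ j, ∫ ω, ‖X j ω - m j‖ ^ 2 ∂μ) + ‖∑ j, m j‖ ^ 2 := by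
        rw [Finset.sum_add_distrib, Finset.sum_comm]
        congr 1
        · refine Finset.sum_congr rfl fun j _ => ?_
          rw [← integral_finset_sum _ (fun i _ => hintsum j i)]
          refine integral_congr_ae (Filter.Eventually.of_forall fun ω => ?_)
          simp only [euclid_norm_sq, euclid_sub_apply]
        · simp only [euclid_norm_sq, euclid_sum_apply]

lemma norm_sum_sq_le_card {ι : Type*} [Fintype ι] {d : ℕ}
    (v : ι → EuclideanSpace ℝ (Fin d)) :
    ‖∑ j, v j‖ ^ 2 ≤ (Fintype.card ι : ℝ) * ∑ j, ‖v j‖ ^ 2 := by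
  have h1 : ‖∑ j, v j‖ ^ 2 ≤ (∑ j, ‖v j‖) ^ 2 :=
    pow_le_pow_left₀ (norm_nonneg _) (norm_sum_le Finset.univ v) 2
  refine h1.trans ?_
  have := sq_sum_le_card_mul_sum_sq (s := (Finset.univ : Finset ι))
    (f := fun j => ‖v j‖)
  simpa [Finset.card_univ] using this

theorem fedsi_quantized_average_bound
    {Ωz ΩQ : Type*} [MeasurableSpace Ωz] [MeasurableSpace ΩQ]
    (μz : Measure Ωz) (μQ : Measure ΩQ)
    [IsProbabilityMeasure μz] [IsProbabilityMeasure μQ]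
    (d N τ : ℕ) (hN : 0 < N) (s : ℕ) (hs : 2 < s) (σ t q : ℝ) (ht : 0 < t) (ht1 : t ≤ 1)
    (hq : q = 4 * d / ((s : ℝ) - 2) ^ 2)
    (gt : Fin N → Fin τ → Ωz → EuclideanSpace ℝ (Fin d))
    (g : Fin N → Fin τ → EuclideanSpace ℝ (Fin d))
    (Qg : Fin N → Ωz → ΩQ → EuclideanSpace ℝ (Fin d))
    (α : Fin N → ℝ) (hα : ∀ j, α j = 0 ∨ α j = 1)
    (D : Fin N → Ωz → ℝ) (hD : ∀ j z, 0 ≤ D j z) (hDt : ∀ j z, α j = 1 → D j z < t)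
    -- stochastic gradients: square-integrable, unbiased, variance at most σ²,
    -- independent across clients and local steps
    (hgL2 : ∀ j c, MemLp (gt j c) 2 μz)
    (hgmeas : ∀ j c, Measurable (gt j c))
    (hgindep : iIndepFun
      (fun (p : Fin N × Fin τ) => gt p.1 p.2) μz)
    (hgmean : ∀ j c, ∫ z, gt j c z ∂μz = g j c)
    (hgvar : ∀ j c, ∫ z, ‖gt j c z - g j c‖ ^ 2 ∂μz ≤ σ ^ 2)
    -- quantizer: jointly square-integrable, unbiased given the sampled gradients,
    -- relative variance bound with side information, independent across clients
    (hQL2 : ∀ j, MemLp (fun p : Ωz × ΩQ => Qg j p.1 p.2) 2 (μz.prod μQ))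
    (hQmeas : ∀ j z, Measurable (Qg j z))
    (hQindep : ∀ z, iIndepFun (fun j => Qg j z) μQ)
    (hQmean : ∀ j z, ∫ ωQ, Qg j z ωQ ∂μQ = ∑ c, gt j c z)
    (hQvar : ∀ j z, ∫ ωQ, ‖Qg j z ωQ - ∑ c, gt j c z‖ ^ 2 ∂μQ
      ≤ q * (α j * (D j z - 1) + 1) * ‖∑ c, gt j c z‖ ^ 2) :
    ∫ z, ∫ ωQ, ‖(N : ℝ)⁻¹ • ∑ j, Qg j z ωQ‖ ^ 2 ∂μQ ∂μz
      ≤ (τ : ℝ) * σ ^ 2 / N * (q / N * (∑ j, (α j * (t - 1) + 1)) + 1)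
        + (τ : ℝ) / N * ∑ j, (q * (α j * (t - 1) + 1) / N + 1)
            * ∑ c, ‖g j c‖ ^ 2 := by
  classical
  have hN0 : (N : ℝ) ≠ 0 := Nat.cast_ne_zero.mpr hN.ne'
  have hq0 : 0 ≤ q := by rw [hq]; positivity
  have hA0 : ∀ j, 0 ≤ q * (α j * (t - 1) + 1) := by
    intro j
    rcases hα j with h | h
    · simp [h, hq0]
    · simp only [h, one_mul, sub_add_cancel]
      exact mul_nonneg hq0 ht.le
  have hAb : ∀ j z, q * (α j * (D j z - 1) + 1) ≤ q * (α j * (t - 1) + 1) := by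
    intro j z
    rcases hα j with h | h
    · simp [h]
    · have hd := hDt j z h
      simp only [h, one_mul, sub_add_cancel]
      exact mul_le_mul_of_nonneg_left (by linarith) hq0
  -- L² and means of accumulated gradients
  have hGL2 : ∀ j, MemLp (fun z => ∑ c, gt j c z) 2 μz := by
    intro j
    have h := memLp_finset_sum' (μ := μz) Finset.univ (fun c _ => hgL2 j c)
    have he : (∑ c ∈ Finset.univ, gt j c) = fun z => ∑ c, gt j c z := by
      funext z; simp
    rwa [he] at h
  have hGL2sum : MemLp (fun z => ∑ j, ∑ c, gt j c z) 2 μz := by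
    have h := memLp_finset_sum' (μ := μz) Finset.univ
      (fun (j : Fin N) _ => hGL2 j)
    have he : (∑ j ∈ Finset.univ, fun z => ∑ c, gt j c z)
        = fun z => ∑ j, ∑ c, gt j c z := by
      funext z; simp
    rwa [he] at h
  have hGint : ∀ j, Integrable (fun z => ‖∑ c, gt j c z‖ ^ 2) μz :=
    fun j => (hGL2 j).norm.integrable_sq
  have hGsumint : Integrable (fun z => ‖∑ j, ∑ c, gt j c z‖ ^ 2) μz :=
    hGL2sum.norm.integrable_sq
  -- per-client second moment bound
  have key1 : ∀ j, ∫ z, ‖∑ c, gt j c z‖ ^ 2 ∂μz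
      ≤ (τ : ℝ) * σ ^ 2 + τ * ∑ c, ‖g j c‖ ^ 2 := by
    intro j
    have hdec := fedsi_var_decomp μz (gt j) (g j) (hgL2 j) (hgmeas j)
      (fun c c' hcc' => hgindep.indepFun
        (show ((j, c) : Fin N × Fin τ) ≠ (j, c') from
          fun h => hcc' (congrArg Prod.snd h)))
      (hgmean j)
    rw [hdec]
    have h1 : ∑ c, ∫ z, ‖gt j c z - g j c‖ ^ 2 ∂μz ≤ (τ : ℝ) * σ ^ 2 := by
      calc ∑ c, ∫ z, ‖gt j c z - g j c‖ ^ 2 ∂μz ≤ ∑ _c : Fin τ, σ ^ 2 :=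
            Finset.sum_le_sum fun c _ => hgvar j c
        _ = (τ : ℝ) * σ ^ 2 := by simp [mul_comm]
    have h2 : ‖∑ c, g j c‖ ^ 2 ≤ (τ : ℝ) * ∑ c, ‖g j c‖ ^ 2 := by
      simpa using norm_sum_sq_le_card (g j)
    linarith
  -- second moment of the total sum
  have key2 : ∫ z, ‖∑ j, ∑ c, gt j c z‖ ^ 2 ∂μz
      ≤ (N : ℝ) * τ * σ ^ 2 + (N : ℝ) * τ * ∑ j, ∑ c, ‖g j c‖ ^ 2 := by
    have hdec := fedsi_var_decomp μz (fun p : Fin N × Fin τ => gt p.1 p.2)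
      (fun p => g p.1 p.2) (fun p => hgL2 p.1 p.2) (fun p => hgmeas p.1 p.2)
      (fun p p' h => hgindep.indepFun h) (fun p => hgmean p.1 p.2)
    have hre : (fun z => ‖∑ j, ∑ c, gt j c z‖ ^ 2)
        = fun z => ‖∑ p : Fin N × Fin τ, gt p.1 p.2 z‖ ^ 2 := by
      funext z
      rw [Fintype.sum_prod_type]
    rw [hre, hdec]
    have h1 : ∑ p : Fin N × Fin τ, ∫ z, ‖gt p.1 p.2 z - g p.1 p.2‖ ^ 2 ∂μz
        ≤ (N : ℝ) * τ * σ ^ 2 := by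
      calc ∑ p : Fin N × Fin τ, ∫ z, ‖gt p.1 p.2 z - g p.1 p.2‖ ^ 2 ∂μz
          ≤ ∑ _p : Fin N × Fin τ, σ ^ 2 :=
            Finset.sum_le_sum fun p _ => hgvar p.1 p.2
        _ = (N : ℝ) * τ * σ ^ 2 := by
            simp [Finset.card_univ, mul_comm, mul_assoc]
    have h2 : ‖∑ p : Fin N × Fin τ, g p.1 p.2‖ ^ 2
        ≤ (N : ℝ) * τ * ∑ j, ∑ c, ‖g j c‖ ^ 2 := by
      have ha : ‖∑ p : Fin N × Fin τ, g p.1 p.2‖ ^ 2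
          ≤ (N : ℝ) * ∑ j, ‖∑ c, g j c‖ ^ 2 := by
        have := norm_sum_sq_le_card (fun j : Fin N => ∑ c, g j c)
        simpa [Fintype.sum_prod_type] using this
      refine ha.trans ?_
      have hb : ∑ j, ‖∑ c, g j c‖ ^ 2 ≤ ∑ j, (τ : ℝ) * ∑ c, ‖g j c‖ ^ 2 :=
        Finset.sum_le_sum fun j _ => by simpa using norm_sum_sq_le_card (g j)
      calc (N : ℝ) * ∑ j, ‖∑ c, g j c‖ ^ 2
          ≤ (N : ℝ) * ∑ j, (τ : ℝ) * ∑ c, ‖g j c‖ ^ 2 := by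
            exact mul_le_mul_of_nonneg_left hb (by positivity)
        _ = (N : ℝ) * τ * ∑ j, ∑ c, ‖g j c‖ ^ 2 := by
            rw [Finset.mul_sum, Finset.mul_sum]
            exact Finset.sum_congr rfl fun j _ => by ring
    linarith
  -- a.e. square-integrability of quantizer slices
  have hslice : ∀ᵐ z ∂μz, ∀ j, MemLp (Qg j z) 2 μQ := by
    rw [ae_all_iff]
    intro j
    have hint : Integrable (fun p : Ωz × ΩQ => ‖Qg j p.1 p.2‖ ^ 2) (μz.prod μQ) :=
      (memLp_two_iff_integrable_sq_norm (hQL2 j).aestronglyMeasurable).mp (hQL2 j)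
    filter_upwards [hint.prod_right_ae] with z hz
    exact (memLp_two_iff_integrable_sq_norm (hQmeas j z).aestronglyMeasurable).mpr hz
  -- pointwise (in z) bound on the inner integral
  have hptwise : ∀ᵐ z ∂μz,
      ∫ ωQ, ‖(N : ℝ)⁻¹ • ∑ j, Qg j z ωQ‖ ^ 2 ∂μQ
        ≤ ((N : ℝ) ^ 2)⁻¹ * ((∑ j, q * (α j * (t - 1) + 1) * ‖∑ c, gt j c z‖ ^ 2)
            + ‖∑ j, ∑ c, gt j c z‖ ^ 2) := by
    filter_upwards [hslice] with z hz
    have hdec := fedsi_var_decomp μQ (fun j => Qg j z) (fun j => ∑ c, gt j c z)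
      hz (fun j => hQmeas j z) (fun j k hjk => (hQindep z).indepFun hjk)
      (fun j => hQmean j z)
    have hsmul : ∀ ωQ, ‖(N : ℝ)⁻¹ • ∑ j, Qg j z ωQ‖ ^ 2
        = ((N : ℝ) ^ 2)⁻¹ * ‖∑ j, Qg j z ωQ‖ ^ 2 := by
      intro ω
      rw [norm_smul, Real.norm_eq_abs, abs_inv, Nat.abs_cast, mul_pow, inv_pow]
    calc ∫ ωQ, ‖(N : ℝ)⁻¹ • ∑ j, Qg j z ωQ‖ ^ 2 ∂μQ
        = ((N : ℝ) ^ 2)⁻¹ * ∫ ωQ, ‖∑ j, Qg j z ωQ‖ ^ 2 ∂μQ := by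
          simp_rw [hsmul]
          exact integral_const_mul _ _
      _ = ((N : ℝ) ^ 2)⁻¹ * ((∑ j, ∫ ωQ, ‖Qg j z ωQ - ∑ c, gt j c z‖ ^ 2 ∂μQ)
            + ‖∑ j, ∑ c, gt j c z‖ ^ 2) := by rw [hdec]
      _ ≤ _ := by
          refine mul_le_mul_of_nonneg_left (add_le_add_left ?_ _) (by positivity)
          refine Finset.sum_le_sum fun j _ => ?_
          exact (hQvar j z).trans
            (mul_le_mul_of_nonneg_right (hAb j z) (by positivity))
  -- integrate the bound over z
  have hRint : Integrable (fun z => ((N : ℝ) ^ 2)⁻¹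
      * ((∑ j, q * (α j * (t - 1) + 1) * ‖∑ c, gt j c z‖ ^ 2)
          + ‖∑ j, ∑ c, gt j c z‖ ^ 2)) μz := by
    refine Integrable.const_mul ?_ _
    exact (integrable_finset_sum _ fun j _ => (hGint j).const_mul _).add hGsumint
  have hmono : ∫ z, ∫ ωQ, ‖(N : ℝ)⁻¹ • ∑ j, Qg j z ωQ‖ ^ 2 ∂μQ ∂μz
      ≤ ∫ z, ((N : ℝ) ^ 2)⁻¹
          * ((∑ j, q * (α j * (t - 1) + 1) * ‖∑ c, gt j c z‖ ^ 2)
              + ‖∑ j, ∑ c, gt j c z‖ ^ 2) ∂μz := by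
    refine integral_mono_of_nonneg ?_ hRint hptwise
    exact Filter.Eventually.of_forall fun z =>
      integral_nonneg fun ω => by positivity
  refine hmono.trans ?_
  have hRval : ∫ z, ((N : ℝ) ^ 2)⁻¹
      * ((∑ j, q * (α j * (t - 1) + 1) * ‖∑ c, gt j c z‖ ^ 2)
          + ‖∑ j, ∑ c, gt j c z‖ ^ 2) ∂μz
      = ((N : ℝ) ^ 2)⁻¹
        * ((∑ j, q * (α j * (t - 1) + 1) * ∫ z, ‖∑ c, gt j c z‖ ^ 2 ∂μz)
            + ∫ z, ‖∑ j, ∑ c, gt j c z‖ ^ 2 ∂μz) := by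
    rw [integral_const_mul]
    congr 1
    rw [integral_add (integrable_finset_sum _ fun j _ => (hGint j).const_mul _)
      hGsumint]
    congr 1
    rw [integral_finset_sum _ fun j _ => (hGint j).const_mul _]
    exact Finset.sum_congr rfl fun j _ => integral_const_mul _ _
  rw [hRval]
  -- combine the bounds
  have hbound : ((N : ℝ) ^ 2)⁻¹
      * ((∑ j, q * (α j * (t - 1) + 1) * ∫ z, ‖∑ c, gt j c z‖ ^ 2 ∂μz)
          + ∫ z, ‖∑ j, ∑ c, gt j c z‖ ^ 2 ∂μz)
      ≤ ((N : ℝ) ^ 2)⁻¹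
        * ((∑ j, q * (α j * (t - 1) + 1) * ((τ : ℝ) * σ ^ 2 + τ * ∑ c, ‖g j c‖ ^ 2))
            + ((N : ℝ) * τ * σ ^ 2 + (N : ℝ) * τ * ∑ j, ∑ c, ‖g j c‖ ^ 2)) := by
    refine mul_le_mul_of_nonneg_left (add_le_add ?_ key2) (by positivity)
    exact Finset.sum_le_sum fun j _ =>
      mul_le_mul_of_nonneg_left (key1 j) (hA0 j)
  refine hbound.trans (le_of_eq ?_)
  -- final algebraic identity
  have expand1 : ∑ j, q * (α j * (t - 1) + 1) * ((τ : ℝ) * σ ^ 2 + τ * ∑ c, ‖g j c‖ ^ 2)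
      = (τ : ℝ) * σ ^ 2 * (q * ∑ j, (α j * (t - 1) + 1))
        + τ * ∑ j, q * (α j * (t - 1) + 1) * ∑ c, ‖g j c‖ ^ 2 := by
    rw [Finset.mul_sum, Finset.mul_sum, Finset.mul_sum, ← Finset.sum_add_distrib]
    exact Finset.sum_congr rfl fun j _ => by ring
  have expand2 : ∑ j, (q * (α j * (t - 1) + 1) / N + 1) * ∑ c, ‖g j c‖ ^ 2
      = (∑ j, q * (α j * (t - 1) + 1) * ∑ c, ‖g j c‖ ^ 2) / N
        + ∑ j, ∑ c, ‖g j c‖ ^ 2 := by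
    rw [Finset.sum_div, ← Finset.sum_add_distrib]
    exact Finset.sum_congr rfl fun j _ => by ring
  rw [expand1, expand2]
  set a := ∑ j, (α j * (t - 1) + 1)
  set b := ∑ j, q * (α j * (t - 1) + 1) * ∑ c, ‖g j c‖ ^ 2
  set c := ∑ j, ∑ c, ‖g j c‖ ^ 2
  field_simp
  ring
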